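/- For any two D×M index matrices K₁ and K₂ (over ℝ), there exists a D×D permutation matrix φ such that φ * K₁ = K₂. In particular, knowing only a permuted index matrix, every index matrix is a possible preimage under some unknown permutation. -/

import Mathlib

/-- A permutation matrix of size `D`: a real `D × D` matrix all of whose entries lie in
`{0, 1}` and such that every row and every column contains exactly one entry equal to `1`. -/
def IsPermMatrix {D : ℕ} (φ : Matrix (Fin D) (Fin D) ℝ) : Prop :=
  (∀ i j, φ i j = 0 ∨ φ i j = 1) ∧
  (∀ i, ∃! j, φ i j = 1) ∧
  (∀ j, ∃! i, φ i j = 1)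

/-- An index matrix of size `D × M`: a real `D × M` matrix all of whose entries lie in
`{0, 1}`, every column contains exactly one entry equal to `1`, and every row contains
at most one entry equal to `1`. -/
def IsIndexMatrix {D M : ℕ} (K : Matrix (Fin D) (Fin M) ℝ) : Prop :=
  (∀ i m, K i m = 0 ∨ K i m = 1) ∧
  (∀ m, ∃! i, K i m = 1) ∧
  (∀ i m m', K i m = 1 → K i m' = 1 → m = m')

theorem exists_perm_mapping_index_matrices {D M : ℕ}
    (K₁ K₂ : Matrix (Fin D) (Fin M) ℝ)
    (hK₁ : IsIndexMatrix K₁) (hK₂ : IsIndexMatrix K₂) :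
    ∃ φ : Matrix (Fin D) (Fin D) ℝ, IsPermMatrix φ ∧ φ * K₁ = K₂ := by
  classical
  -- the row containing the 1 in column m
  set r₁ : Fin M → Fin D := fun m => (hK₁.2.1 m).choose with hr₁def
  set r₂ : Fin M → Fin D := fun m => (hK₂.2.1 m).choose with hr₂def
  have hr₁ : ∀ m, K₁ (r₁ m) m = 1 := fun m => (hK₁.2.1 m).choose_spec.1
  have hr₂ : ∀ m, K₂ (r₂ m) m = 1 := fun m => (hK₂.2.1 m).choose_spec.1
  have hK₁iff : ∀ i m, K₁ i m = 1 ↔ i = r₁ m := by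
    intro i m
    constructor
    · intro h
      exact ((hK₁.2.1 m).choose_spec.2 i h)
    · rintro rfl; exact hr₁ m
  have hK₂iff : ∀ i m, K₂ i m = 1 ↔ i = r₂ m := by
    intro i m
    constructor
    · intro h
      exact ((hK₂.2.1 m).choose_spec.2 i h)
    · rintro rfl; exact hr₂ m
  have hinj₁ : Function.Injective r₁ := by
    intro m m' h
    exact hK₁.2.2 (r₁ m) m m' (hr₁ m) (by rw [h]; exact hr₁ m')
  have hinj₂ : Function.Injective r₂ := by
    intro m m' h
    exact hK₂.2.2 (r₂ m) m m' (hr₂ m) (by rw [h]; exact hr₂ m')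
  -- build an equivalence between the ranges
  let e : {x : Fin D // x ∈ Set.range r₁} ≃ {x : Fin D // x ∈ Set.range r₂} :=
    (Equiv.ofInjective r₁ hinj₁).symm.trans (Equiv.ofInjective r₂ hinj₂)
  let σ : Equiv.Perm (Fin D) := e.extendSubtype
  have hσ : ∀ m, σ (r₁ m) = r₂ m := by
    intro m
    have hmem : r₁ m ∈ Set.range r₁ := ⟨m, rfl⟩
    have h1 : σ (r₁ m) = (e ⟨r₁ m, hmem⟩ : Fin D) := e.extendSubtype_apply_of_mem _ hmem
    have h2 : (Equiv.ofInjective r₁ hinj₁).symm ⟨r₁ m, hmem⟩ = m := by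
      set_option linter.unnecessarySimpa false in simpa using Function.leftInverse_invFun hinj₁ m
    simp only [e, Equiv.trans_apply, h2] at h1
    simpa [Equiv.ofInjective] using h1
  refine ⟨fun i j => if σ j = i then 1 else 0, ⟨?_, ?_, ?_⟩, ?_⟩
  · intro i j; by_cases h : σ j = i <;> simp [h]
  · intro i
    refine ⟨σ.symm i, by simp, ?_⟩
    intro j hj
    by_cases h : σ j = i
    · exact σ.injective (by simp [h])
    · simp [h] at hj
  · intro j
    refine ⟨σ j, by simp, ?_⟩
    intro i hi
    by_cases h : σ j = i
    · exact h.symm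
    · simp [h] at hi
  · ext i m
    change ∑ j, (if σ j = i then (1:ℝ) else 0) * K₁ j m = K₂ i m
    rw [Finset.sum_eq_single (σ.symm i)]
    · rw [Equiv.apply_symm_apply, if_pos rfl, one_mul]
      by_cases h : i = r₂ m
      · rw [(hK₂iff i m).2 h]
        apply (hK₁iff _ m).2
        subst h
        have := hσ m
        apply σ.injective
        rw [Equiv.apply_symm_apply, this]
      · have h2 : K₂ i m = 0 := (hK₂.1 i m).resolve_right (fun h1 => h ((hK₂iff i m).1 h1))
        rw [h2]
        rcases hK₁.1 (σ.symm i) m with h0 | h1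
        · exact h0
        · exfalso
          apply h
          have := (hK₁iff _ m).1 h1
          rw [← hσ m, ← this]
          simp
    · intro j _ hj
      rw [if_neg (fun h => hj (by rw [← h]; simp)), zero_mul]
    · intro h; exact absurd (Finset.mem_univ _) h
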